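/- Let x : N → ℝ be a finite family of agent positions and let z be a point minimizing the total distance ∑_{i∈N} |x_i − t| over t in a set Z ⊆ ℝ containing z. If a single agent i with x_i < p ≤ z (or x_i > p ≥ z) for some p ∈ ℝ is moved to p, then z still minimizes ∑ over the new position profile, i.e., for every y ∈ Z, |p − z| + ∑_{j≠i} |x_j − z| ≤ |p − y| + ∑_{j≠i} |x_j − y|. -/

import Mathlib

theorem stmt_2 {N : Type*} [Fintype N] [DecidableEq N]
    (x : N → ℝ) (Z : Set ℝ) (z : ℝ)
    (hz : z ∈ Z)
    (hmin : ∀ t ∈ Z, ∑ j, |x j - z| ≤ ∑ j, |x j - t|)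
    (i : N) (p : ℝ)
    (hp : (x i < p ∧ p ≤ z) ∨ (x i > p ∧ p ≥ z)) :
    ∀ y ∈ Z,
      |p - z| + ∑ j ∈ Finset.univ.erase i, |x j - z| ≤
        |p - y| + ∑ j ∈ Finset.univ.erase i, |x j - y| := by
  intro y hy
  have h1 : |x i - z| = |x i - p| + |p - z| := by
    rcases hp with ⟨h1, h2⟩ | ⟨h1, h2⟩
    · rw [abs_of_nonpos (by linarith), abs_of_nonpos (by linarith),
        abs_of_nonpos (by linarith)]; ring
    · rw [abs_of_nonneg (by linarith), abs_of_nonneg (by linarith),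
        abs_of_nonneg (by linarith)]; ring
  have h2 : |x i - y| ≤ |x i - p| + |p - y| := abs_sub_le (x i) p y
  have h3 := hmin y hy
  rw [← Finset.add_sum_erase _ _ (Finset.mem_univ i),
    ← Finset.add_sum_erase _ (fun j => |x j - y|) (Finset.mem_univ i)] at h3
  linarith
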